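/- Let G be a complex Lie algebra with a decomposition G = G₊ ⊕ G₀ ⊕ G₋ into subalgebras, let η : G₊ → ℂ be a Lie algebra homomorphism (so η vanishes on [G₊,G₊]), and let V be a G-module generated by a vector v with x·v = η(x)v for all x ∈ G₊. If the adjoint action of G₊ on G/G₊ is locally nilpotent, then for every w ∈ V there exists s ∈ ℕ such that (x₁ − η(x₁))(x₂ − η(x₂))⋯(x_s − η(x_s))·w = 0 for all x₁,…,x_s ∈ G₊. -/

import Mathlib

/-- Apply the operators `ad x` for `x` running through a list of elements of `G₊`. -/
def applyAds {G : Type*} [LieRing G] [LieAlgebra ℂ G] (Gp : LieSubalgebra ℂ G)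
    (xs : List Gp) (y : G) : G :=
  xs.foldr (fun x z => ⁅(x : G), z⁆) y

/-- Apply the operators `x − η(x)` for `x` running through a list of elements of `G₊`. -/
def applyWh {G V : Type*} [LieRing G] [LieAlgebra ℂ G]
    [AddCommGroup V] [Module ℂ V] [LieRingModule G V] [LieModule ℂ G V]
    (Gp : LieSubalgebra ℂ G) (η : Gp →ₗ[ℂ] ℂ) (xs : List Gp) (w : V) : V :=
  xs.foldr (fun (x : Gp) (u : V) => ⁅(x : G), u⁆ - η x • u) w

section Aux

variable {G V : Type*} [LieRing G] [LieAlgebra ℂ G]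
    [AddCommGroup V] [Module ℂ V] [LieRingModule G V] [LieModule ℂ G V]
    (Gp : LieSubalgebra ℂ G) (η : Gp →ₗ[ℂ] ℂ)

lemma applyWh_nil (w : V) : applyWh Gp η [] w = w := rfl

lemma applyWh_cons (x : Gp) (xs : List Gp) (w : V) :
    applyWh Gp η (x :: xs) w
      = ⁅(x : G), applyWh Gp η xs w⁆ - η x • applyWh Gp η xs w := rfl

lemma applyWh_append (xs ys : List Gp) (w : V) :
    applyWh Gp η (xs ++ ys) w = applyWh Gp η xs (applyWh Gp η ys w) := by
  simp [applyWh, List.foldr_append]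

lemma applyWh_zero (xs : List Gp) : applyWh Gp η xs (0 : V) = 0 := by
  induction xs with
  | nil => rfl
  | cons a t ih => simp [applyWh_cons, ih]

lemma applyWh_add (xs : List Gp) (w w' : V) :
    applyWh Gp η xs (w + w') = applyWh Gp η xs w + applyWh Gp η xs w' := by
  induction xs with
  | nil => rfl
  | cons a t ih => simp [applyWh_cons, ih, lie_add, smul_add]; abel

lemma applyWh_smul (xs : List Gp) (c : ℂ) (w : V) :
    applyWh Gp η xs (c • w) = c • applyWh Gp η xs w := by
  induction xs with
  | nil => rfl
  | cons a t ih =>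
    simp [applyWh_cons, ih, lie_smul, smul_sub, smul_comm c]

lemma applyWh_mono {s t : ℕ} (h : s ≤ t) (w : V)
    (hb : ∀ xs : List Gp, xs.length = s → applyWh Gp η xs w = 0) :
    ∀ xs : List Gp, xs.length = t → applyWh Gp η xs w = 0 := by
  intro xs hxs
  have hsplit : xs = xs.take (t - s) ++ xs.drop (t - s) :=
    (List.take_append_drop _ _).symm
  rw [hsplit, applyWh_append, hb _ (by simp [hxs]; omega), applyWh_zero]

/-- Apply `applyAds` to an appended singleton. -/
lemma applyAds_append_singleton (xs : List Gp) (x : Gp) (y : G) :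
    applyAds Gp (xs ++ [x]) y = applyAds Gp xs ⁅(x : G), y⁆ := by
  simp [applyAds, List.foldr_append]

/-- Commutation identity: `(x − η x) ∘ ρ(y) = ρ(y) ∘ (x − η x) + ρ([x,y])`. -/
lemma applyWh_singleton_lie (x : Gp) (y : G) (w : V) :
    applyWh Gp η [x] ⁅y, w⁆
      = ⁅y, applyWh Gp η [x] w⁆ + ⁅⁅(x : G), y⁆, w⁆ := by
  show ⁅(x : G), ⁅y, w⁆⁆ - η x • ⁅y, w⁆
      = ⁅y, ⁅(x : G), w⁆ - η x • w⁆ + ⁅⁅(x : G), y⁆, w⁆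
  rw [leibniz_lie, lie_sub, lie_smul]
  abel

/-- Explicit bound function for the double induction. -/
def whB : ℕ → ℕ → ℕ
  | 0, s => s
  | _ + 1, 0 => 0
  | k + 1, s + 1 => max (whB (k + 1) s) (whB k (s + 1)) + 1

@[simp] lemma whB_zero (s : ℕ) : whB 0 s = s := by simp [whB]

lemma lieWh : ∀ (k s : ℕ) (y : G) (w : V),
    (∀ xs : List Gp, xs.length = k → applyAds Gp xs y ∈ Gp) →
    (∀ xs : List Gp, xs.length = s → applyWh Gp η xs w = 0) →
    ∀ xs : List Gp, xs.length = whB k s → applyWh Gp η xs ⁅y, w⁆ = 0 := by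
  intro k
  induction k with
  | zero =>
    intro s y w hy hw xs hxs
    have hyp : y ∈ Gp := hy [] rfl
    set y' : Gp := ⟨y, hyp⟩ with hy'
    have hrepr : ⁅y, w⁆ = applyWh Gp η [y'] w + η y' • w := by
      simp [applyWh_cons, applyWh_nil]
      rfl
    rw [whB_zero] at hxs
    rw [hrepr, applyWh_add, applyWh_smul, ← applyWh_append]
    have h1 : applyWh Gp η (xs ++ [y']) w = 0 :=
      applyWh_mono Gp η (Nat.le_succ s) w hw _ (by simp [hxs])
    have h2 : applyWh Gp η xs w = 0 := hw xs hxs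
    rw [h1, h2, smul_zero, add_zero]
  | succ k ihk =>
    intro s
    induction s with
    | zero =>
      intro y w _ hw xs hxs
      have hw0 : w = 0 := hw [] rfl
      rw [hw0, lie_zero, applyWh_zero]
    | succ s ihs =>
      intro y w hy hw xs hxs
      rcases List.eq_nil_or_concat xs with rfl | ⟨ys, x, rfl⟩
      · simp [whB] at hxs
      · rw [List.concat_eq_append] at hxs ⊢
        have hlen : ys.length = max (whB (k + 1) s) (whB k (s + 1)) := by
          simp [whB] at hxs; simpa using hxs
        rw [applyWh_append, applyWh_singleton_lie, applyWh_add]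
        have hDx : ∀ zs : List Gp, zs.length = s →
            applyWh Gp η zs (applyWh Gp η [x] w) = 0 := by
          intro zs hzs
          rw [← applyWh_append]
          exact hw _ (by simp [hzs])
        have h1 : applyWh Gp η ys ⁅y, applyWh Gp η [x] w⁆ = 0 :=
          applyWh_mono Gp η (le_max_left _ _) _
            (ihs y (applyWh Gp η [x] w) hy hDx) ys hlen
        have hxy : ∀ xs' : List Gp, xs'.length = k →
            applyAds Gp xs' ⁅(x : G), y⁆ ∈ Gp := by
          intro xs' hxs'
          rw [← applyAds_append_singleton]
          exact hy _ (by simp [hxs'])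
        have h2 : applyWh Gp η ys ⁅⁅(x : G), y⁆, w⁆ = 0 :=
          applyWh_mono Gp η (le_max_right _ _) _
            (ihk (s + 1) ⁅(x : G), y⁆ w hxy hw) ys hlen
        rw [h1, h2, add_zero]

end Aux

/-- local nilpotency of the operators `x − η(x)`, `x ∈ G₊`,
on a Whittaker module. -/
theorem stmt0 {G V : Type*} [LieRing G] [LieAlgebra ℂ G]
    [AddCommGroup V] [Module ℂ V] [LieRingModule G V] [LieModule ℂ G V]
    (Gp G0 Gm : LieSubalgebra ℂ G)
    (hdecomp : ∀ g : G, ∃! t : Gp × G0 × Gm, g = (t.1 : G) + (t.2.1 : G) + (t.2.2 : G))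
    (η : Gp →ₗ[ℂ] ℂ) (hη : ∀ x y : Gp, η ⁅x, y⁆ = 0)
    (v : V) (hv0 : v ≠ 0) (hv : ∀ x : Gp, ⁅(x : G), v⁆ = η x • v)
    (hgen : LieSubmodule.lieSpan ℂ G {v} = ⊤)
    (hnil : ∀ y : G, ∃ s : ℕ, ∀ xs : List Gp, xs.length = s → applyAds Gp xs y ∈ Gp)
    (w : V) :
    ∃ s : ℕ, ∀ xs : List Gp, xs.length = s → applyWh Gp η xs w = 0 := by
  classical
  -- The set of vectors killed by long enough Whittaker words is a Lie submodule.
  let N : LieSubmodule ℂ G V :=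
    { carrier := {u | ∃ s : ℕ, ∀ xs : List Gp, xs.length = s → applyWh Gp η xs u = 0}
      add_mem' := by
        rintro a b ⟨s, hs⟩ ⟨t, ht⟩
        refine ⟨max s t, fun xs hxs => ?_⟩
        rw [applyWh_add,
          applyWh_mono Gp η (le_max_left s t) a hs xs hxs,
          applyWh_mono Gp η (le_max_right s t) b ht xs hxs, add_zero]
      zero_mem' := ⟨0, fun xs hxs => by
        have : xs = [] := List.length_eq_zero_iff.mp hxs
        rw [this]; rfl⟩
      smul_mem' := by
        rintro c a ⟨s, hs⟩
        exact ⟨s, fun xs hxs => by rw [applyWh_smul, hs xs hxs, smul_zero]⟩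
      lie_mem := by
        rintro y a ⟨s, hs⟩
        obtain ⟨k, hk⟩ := hnil y
        exact ⟨whB k s, lieWh Gp η k s y a hk hs⟩ }
  have hvN : v ∈ N := by
    refine ⟨1, fun xs hxs => ?_⟩
    obtain ⟨x, rfl⟩ := List.length_eq_one_iff.mp hxs
    show ⁅(x : G), v⁆ - η x • v = 0
    rw [hv x, sub_self]
  have hle : LieSubmodule.lieSpan ℂ G {v} ≤ N :=
    (LieSubmodule.lieSpan_le).mpr (by simpa using hvN)
  have : w ∈ N := hle (by rw [hgen]; trivial)
  exact this
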